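/- Let (B, 𝓛, δ) be an instance of polyline bundle simplification with an orientation fixed for each polyline, and let C be a star cover for it. Let B_central be the set of central bends of the stars in C and let B_first be the set of first bends of all polylines in 𝓛. Then B_central ∪ B_first is a valid simplification of the relaxed instance (B, 𝓛, 2δ): for each polyline L ∈ 𝓛, the simplification of L induced by B_central ∪ B_first contains the start and end point of L, and every segment (b_i, b_j) of this induced simplification has Fréchet distance at most 2δ to the corresponding sub-polyline L[b_i, …, b_j]. Moreover, if |C| ≤ α·OPT_StCo for some α ≥ 1, then |B_central ∪ B_first| ≤ (α + 1)·OPT_PBS. -/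

import Mathlib

/-- Points of the Euclidean plane. -/
abbrev Pt := EuclideanSpace ℝ (Fin 2)

/-- The arc parametrization `c_L : [1, m] → ℝ²` of a polyline given by the list `L` of
its `m` bend points (1-based indexing):
`c_L(x) = (⌊x⌋ + 1 − x)·b_⌊x⌋ + (x − ⌊x⌋)·b_⌈x⌉`. -/
noncomputable def arcParam (L : List Pt) (x : ℝ) : Pt :=
  ((⌊x⌋₊ : ℝ) + 1 - x) • L.getD (⌊x⌋₊ - 1) 0 + (x - (⌊x⌋₊ : ℝ)) • L.getD (⌈x⌉₊ - 1) 0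

/-- The Fréchet distance between two polylines `L₁, L₂` (lists of points in the plane). -/
noncomputable def frechetDist (L₁ L₂ : List Pt) : ℝ :=
  sInf { d : ℝ | ∃ α β : ℝ → ℝ,
    ContinuousOn α (Set.Icc 0 1) ∧ ContinuousOn β (Set.Icc 0 1) ∧
    MonotoneOn α (Set.Icc 0 1) ∧ MonotoneOn β (Set.Icc 0 1) ∧
    α 0 = 1 ∧ β 0 = 1 ∧ α 1 = L₁.length ∧ β 1 = L₂.length ∧
    d = sSup { e : ℝ | ∃ t ∈ Set.Icc (0 : ℝ) 1,
          e = ‖arcParam L₁ (α t) - arcParam L₂ (β t)‖ } }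

/-- getD lemma -/
lemma getD_mem_or_eq (L : List Pt) (n : ℕ) : L.getD n 0 ∈ L ∨ L.getD n 0 = 0 := by
  rcases lt_or_ge n L.length with h | h
  · left; rw [List.getD_eq_getElem _ _ h]; exact List.getElem_mem h
  · right; exact List.getD_eq_default _ _ h

/-- a bound on all points of a list -/
lemma exists_bound (L : List Pt) : ∃ M : ℝ, 0 ≤ M ∧ ∀ n : ℕ, ‖L.getD n 0‖ ≤ M := by
  have hnn : ∀ x ∈ L.map norm, (0:ℝ) ≤ x := by
    intro x hx; rcases List.mem_map.1 hx with ⟨a, _, rfl⟩; positivity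
  refine ⟨(L.map norm).sum, List.sum_nonneg hnn, ?_⟩
  intro n
  rcases getD_mem_or_eq L n with h | h
  · exact List.single_le_sum hnn _ (List.mem_map_of_mem (f := norm) h)
  · rw [h]; simpa using List.sum_nonneg hnn

lemma norm_arcParam_le {L : List Pt} {M : ℝ} (hM : ∀ n : ℕ, ‖L.getD n 0‖ ≤ M)
    {x : ℝ} (hx : 0 ≤ x) : ‖arcParam L x‖ ≤ M := by
  have h1 : (⌊x⌋₊ : ℝ) ≤ x := Nat.floor_le hx
  have h2 : x < (⌊x⌋₊ : ℝ) + 1 := Nat.lt_floor_add_one x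
  have hM0 : 0 ≤ M := le_trans (norm_nonneg _) (hM 0)
  calc ‖arcParam L x‖ ≤ ‖((⌊x⌋₊ : ℝ) + 1 - x) • L.getD (⌊x⌋₊ - 1) 0‖
        + ‖(x - (⌊x⌋₊ : ℝ)) • L.getD (⌈x⌉₊ - 1) 0‖ := norm_add_le _ _
    _ ≤ ((⌊x⌋₊ : ℝ) + 1 - x) * M + (x - (⌊x⌋₊ : ℝ)) * M := by
        rw [norm_smul, norm_smul, Real.norm_eq_abs, Real.norm_eq_abs,
          abs_of_nonneg (by linarith), abs_of_nonneg (by linarith)]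
        gcongr <;> first | linarith | exact hM _
    _ = M := by ring

/-- the inner sup-set is nonempty and bounded above -/
lemma inner_nonempty (L₁ L₂ : List Pt) (α β : ℝ → ℝ) :
    { e : ℝ | ∃ t ∈ Set.Icc (0 : ℝ) 1,
      e = ‖arcParam L₁ (α t) - arcParam L₂ (β t)‖ }.Nonempty :=
  ⟨‖arcParam L₁ (α 0) - arcParam L₂ (β 0)‖, 0, by simp, rfl⟩

lemma inner_nonneg (L₁ L₂ : List Pt) (α β : ℝ → ℝ) :
    ∀ e ∈ { e : ℝ | ∃ t ∈ Set.Icc (0 : ℝ) 1,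
      e = ‖arcParam L₁ (α t) - arcParam L₂ (β t)‖ }, 0 ≤ e := by
  rintro e ⟨t, _, rfl⟩; positivity

lemma frechetDist_nonneg (L₁ L₂ : List Pt) : 0 ≤ frechetDist L₁ L₂ := by
  apply Real.sInf_nonneg
  rintro d ⟨α, β, _, _, _, _, _, _, _, _, rfl⟩
  exact Real.sSup_nonneg (inner_nonneg L₁ L₂ α β)

lemma frechetDist_bddBelow (L₁ L₂ : List Pt) :
    BddBelow { d : ℝ | ∃ α β : ℝ → ℝ,
    ContinuousOn α (Set.Icc 0 1) ∧ ContinuousOn β (Set.Icc 0 1) ∧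
    MonotoneOn α (Set.Icc 0 1) ∧ MonotoneOn β (Set.Icc 0 1) ∧
    α 0 = 1 ∧ β 0 = 1 ∧ α 1 = L₁.length ∧ β 1 = L₂.length ∧
    d = sSup { e : ℝ | ∃ t ∈ Set.Icc (0 : ℝ) 1,
          e = ‖arcParam L₁ (α t) - arcParam L₂ (β t)‖ } } := by
  refine ⟨0, ?_⟩
  rintro d ⟨α, β, _, _, _, _, _, _, _, _, rfl⟩
  exact Real.sSup_nonneg (inner_nonneg L₁ L₂ α β)

lemma frechetDist_le {L₁ L₂ : List Pt} {c : ℝ} {α β : ℝ → ℝ}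
    (hcα : ContinuousOn α (Set.Icc 0 1)) (hcβ : ContinuousOn β (Set.Icc 0 1))
    (hmα : MonotoneOn α (Set.Icc 0 1)) (hmβ : MonotoneOn β (Set.Icc 0 1))
    (h0α : α 0 = 1) (h0β : β 0 = 1)
    (h1α : α 1 = L₁.length) (h1β : β 1 = L₂.length)
    (hb : ∀ t ∈ Set.Icc (0:ℝ) 1, ‖arcParam L₁ (α t) - arcParam L₂ (β t)‖ ≤ c) :
    frechetDist L₁ L₂ ≤ c := by
  have hd : sSup { e : ℝ | ∃ t ∈ Set.Icc (0 : ℝ) 1,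
      e = ‖arcParam L₁ (α t) - arcParam L₂ (β t)‖ } ≤ c := by
    apply csSup_le (inner_nonempty L₁ L₂ α β)
    rintro e ⟨t, ht, rfl⟩; exact hb t ht
  refine le_trans (csInf_le (frechetDist_bddBelow L₁ L₂) ?_) hd
  exact ⟨α, β, hcα, hcβ, hmα, hmβ, h0α, h0β, h1α, h1β, rfl⟩

/-- the linear matching -/
lemma linear_matching (m : ℕ) (hm : 1 ≤ m) :
    ContinuousOn (fun t : ℝ => 1 + t * ((m : ℝ) - 1)) (Set.Icc 0 1) ∧
    MonotoneOn (fun t : ℝ => 1 + t * ((m : ℝ) - 1)) (Set.Icc 0 1) ∧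
    (1 + (0:ℝ) * ((m : ℝ) - 1) = 1) ∧ (1 + (1:ℝ) * ((m : ℝ) - 1) = m) := by
  have hm' : (0:ℝ) ≤ (m : ℝ) - 1 := by
    have : (1:ℝ) ≤ m := by exact_mod_cast hm
    linarith
  refine ⟨(continuous_const.add (continuous_id.mul continuous_const)).continuousOn, ?_, by ring, by ring⟩
  intro a _ b _ hab
  simp only []
  nlinarith

lemma frechetDist_set_nonempty (L₁ L₂ : List Pt) (h₁ : 1 ≤ L₁.length) (h₂ : 1 ≤ L₂.length) :
    { d : ℝ | ∃ α β : ℝ → ℝ,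
    ContinuousOn α (Set.Icc 0 1) ∧ ContinuousOn β (Set.Icc 0 1) ∧
    MonotoneOn α (Set.Icc 0 1) ∧ MonotoneOn β (Set.Icc 0 1) ∧
    α 0 = 1 ∧ β 0 = 1 ∧ α 1 = L₁.length ∧ β 1 = L₂.length ∧
    d = sSup { e : ℝ | ∃ t ∈ Set.Icc (0 : ℝ) 1,
          e = ‖arcParam L₁ (α t) - arcParam L₂ (β t)‖ } }.Nonempty := by
  obtain ⟨hc1, hm1, h01, h11⟩ := linear_matching L₁.length h₁
  obtain ⟨hc2, hm2, h02, h12⟩ := linear_matching L₂.length h₂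
  exact ⟨_, _, _, hc1, hc2, hm1, hm2, h01, h02, h11, h12, rfl⟩

/-- extract a near-optimal matching -/
lemma exists_good_matching {L₁ L₂ : List Pt} (h₁ : 1 ≤ L₁.length) (h₂ : 1 ≤ L₂.length)
    {c : ℝ} (h : frechetDist L₁ L₂ < c) :
    ∃ α β : ℝ → ℝ,
      ContinuousOn α (Set.Icc 0 1) ∧ ContinuousOn β (Set.Icc 0 1) ∧
      MonotoneOn α (Set.Icc 0 1) ∧ MonotoneOn β (Set.Icc 0 1) ∧
      α 0 = 1 ∧ β 0 = 1 ∧ α 1 = L₁.length ∧ β 1 = L₂.length ∧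
      ∀ t ∈ Set.Icc (0:ℝ) 1, ‖arcParam L₁ (α t) - arcParam L₂ (β t)‖ ≤ c := by
  obtain ⟨d, hd, hdc⟩ := exists_lt_of_csInf_lt (frechetDist_set_nonempty L₁ L₂ h₁ h₂) h
  obtain ⟨α, β, hcα, hcβ, hmα, hmβ, h0α, h0β, h1α, h1β, rfl⟩ := hd
  refine ⟨α, β, hcα, hcβ, hmα, hmβ, h0α, h0β, h1α, h1β, fun t ht => ?_⟩
  obtain ⟨M₁, hM₁0, hM₁⟩ := exists_bound L₁
  obtain ⟨M₂, hM₂0, hM₂⟩ := exists_bound L₂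
  have hbdd : BddAbove { e : ℝ | ∃ t ∈ Set.Icc (0 : ℝ) 1,
      e = ‖arcParam L₁ (α t) - arcParam L₂ (β t)‖ } := by
    refine ⟨M₁ + M₂, ?_⟩
    rintro e ⟨s, hs, rfl⟩
    have hαs : 0 ≤ α s := by
      have := hmα (by simp) hs hs.1
      rw [h0α] at this; linarith
    have hβs : 0 ≤ β s := by
      have := hmβ (by simp) hs hs.1
      rw [h0β] at this; linarith
    calc ‖arcParam L₁ (α s) - arcParam L₂ (β s)‖
        ≤ ‖arcParam L₁ (α s)‖ + ‖arcParam L₂ (β s)‖ := norm_sub_le _ _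
      _ ≤ M₁ + M₂ := add_le_add (norm_arcParam_le hM₁ hαs) (norm_arcParam_le hM₂ hβs)
  exact le_of_lt (lt_of_le_of_lt (le_csSup hbdd ⟨t, ht, rfl⟩) hdc)

/-- master formula for arcParam on `[n, n+1]` -/
lemma arcParam_eq (L : List Pt) (n : ℕ) (hn : 1 ≤ n) {x : ℝ}
    (h1 : (n : ℝ) ≤ x) (h2 : x ≤ (n : ℝ) + 1) :
    arcParam L x = ((n : ℝ) + 1 - x) • L.getD (n - 1) 0 + (x - (n : ℝ)) • L.getD n 0 := by
  have hx0 : (0:ℝ) ≤ x := le_trans (by positivity) h1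
  rcases eq_or_lt_of_le h2 with h2' | h2'
  · have hx : ((n + 1 : ℕ) : ℝ) = x := by push_cast; linarith
    have hfl : ⌊x⌋₊ = n + 1 := by rw [← hx, Nat.floor_natCast]
    have hcl : ⌈x⌉₊ = n + 1 := by rw [← hx, Nat.ceil_natCast]
    rw [arcParam, hfl, hcl]
    simp only [Nat.add_sub_cancel]
    match_scalars <;> (rw [← hx]; push_cast; ring)
  · have hfl : ⌊x⌋₊ = n := by
      rw [Nat.floor_eq_iff hx0]
      exact ⟨h1, h2'⟩
    rcases eq_or_lt_of_le h1 with h1' | h1'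
    · have hx : ((n : ℕ) : ℝ) = x := h1'
      have hcl : ⌈x⌉₊ = n := by rw [← hx, Nat.ceil_natCast]
      rw [arcParam, hfl, hcl]
      match_scalars <;> (rw [← hx]; push_cast; ring)
    · have hcl : ⌈x⌉₊ = n + 1 := by
        rw [Nat.ceil_eq_iff (by omega)]
        constructor
        · simpa using h1'
        · push_cast; linarith
      rw [arcParam, hfl, hcl]
      simp only [Nat.add_sub_cancel]

lemma arcParam_natCast (L : List Pt) (n : ℕ) (hn : 1 ≤ n) :
    arcParam L (n : ℝ) = L.getD (n - 1) 0 := by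
  rw [arcParam_eq L n hn le_rfl (by linarith)]
  match_scalars <;> ring

lemma arcParam_pair (a b : Pt) {x : ℝ} (h1 : 1 ≤ x) (h2 : x ≤ 2) :
    arcParam [a, b] x = (2 - x) • a + (x - 1) • b := by
  have h := arcParam_eq [a, b] 1 le_rfl (by exact_mod_cast h1) (by push_cast; linarith)
  simp only [Nat.cast_one, show (1:ℕ)-1 = 0 from rfl, List.getD_cons_zero,
    List.getD_cons_succ] at h
  rw [h]
  match_scalars <;> ring

/-- arcParam only depends on the entries below `⌈x⌉₊`. -/
lemma arcParam_congr {L₁ L₂ : List Pt} {x : ℝ} (hx : 1 ≤ x)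
    (h : ∀ j : ℕ, j < ⌈x⌉₊ → L₁.getD j 0 = L₂.getD j 0) :
    arcParam L₁ x = arcParam L₂ x := by
  have h0 : 1 ≤ ⌈x⌉₊ := by
    rw [Nat.one_le_ceil_iff]; linarith
  have hfl : ⌊x⌋₊ - 1 < ⌈x⌉₊ := by
    have := Nat.floor_le_ceil x; omega
  rw [arcParam, arcParam, h _ hfl, h _ (by omega)]

lemma getD_drop (L : List Pt) (w j : ℕ) : (L.drop w).getD j 0 = L.getD (w + j) 0 := by
  simp [List.getD_eq_getElem?_getD, List.getElem?_drop]

lemma getD_take (L : List Pt) {n j : ℕ} (h : j < n) : (L.take n).getD j 0 = L.getD j 0 := by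
  simp [List.getD_eq_getElem?_getD, List.getElem?_take_of_lt h]

lemma getD_reverse (L : List Pt) {j : ℕ} (h : j < L.length) :
    L.reverse.getD j 0 = L.getD (L.length - 1 - j) 0 := by
  simp [List.getD_eq_getElem?_getD, List.getElem?_reverse h]

lemma arcParam_drop (L : List Pt) (w : ℕ) {y : ℝ} (hy : 1 ≤ y) :
    arcParam (L.drop w) y = arcParam L (y + w) := by
  have hy0 : (0:ℝ) ≤ y := by linarith
  have hfl : ⌊y + (w:ℝ)⌋₊ = ⌊y⌋₊ + w := Nat.floor_add_natCast hy0 w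
  have hcl : ⌈y + (w:ℝ)⌉₊ = ⌈y⌉₊ + w := Nat.ceil_add_natCast hy0 w
  have hfl1 : 1 ≤ ⌊y⌋₊ := Nat.le_floor (by exact_mod_cast hy)
  rw [arcParam, arcParam, hfl, hcl, getD_drop, getD_drop]
  have e1 : w + (⌊y⌋₊ - 1) = ⌊y⌋₊ + w - 1 := by omega
  have e2 : w + (⌈y⌉₊ - 1) = ⌈y⌉₊ + w - 1 := by
    have : 1 ≤ ⌈y⌉₊ := by rw [Nat.one_le_ceil_iff]; linarith
    omega
  rw [e1, e2]
  push_cast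
  match_scalars <;> ring

/-- arcParam of the sub-polyline `(L.drop a).take m` agrees with a shifted arcParam of `L`
on `[1, m]`. -/
lemma arcParam_drop_take (L : List Pt) (a m : ℕ) {y : ℝ} (hy : 1 ≤ y) (hym : y ≤ m) :
    arcParam ((L.drop a).take m) y = arcParam L (y + a) := by
  rw [arcParam_congr hy (L₂ := L.drop a) ?_, arcParam_drop L a hy]
  intro j hj
  have : j < m := lt_of_lt_of_le hj (Nat.ceil_le.2 hym)
  exact getD_take _ this

lemma arcParam_reverse (L : List Pt) {x : ℝ} (h1 : 1 ≤ x) (h2 : x ≤ L.length) :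
    arcParam L.reverse ((L.length : ℝ) + 1 - x) = arcParam L x := by
  set m := L.length with hm
  have hx0 : (0:ℝ) ≤ x := by linarith
  have hm1 : 1 ≤ m := by exact_mod_cast le_trans h1 h2
  set n := ⌊x⌋₊ with hn
  have hn1 : 1 ≤ n := Nat.le_floor (by exact_mod_cast h1)
  have hnm : n ≤ m := Nat.floor_le_of_le h2 |>.trans (by simp [hm])
  rcases eq_or_lt_of_le (Nat.floor_le hx0) with hint | hint
  · -- x is the natural number n
    have hx : ((n : ℕ) : ℝ) = x := hint
    have hyx : ((m + 1 - n : ℕ) : ℝ) = (m : ℝ) + 1 - x := by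
      rw [← hx]; push_cast [Nat.cast_sub (by omega : n ≤ m + 1)]; ring
    rw [← hyx, ← hx, arcParam_natCast _ _ (by omega), arcParam_natCast _ _ hn1]
    rw [getD_reverse]
    · congr 1
      simp only [List.length_reverse, ← hm]
      omega
    · simp only [List.length_reverse, ← hm]; omega
  · -- n < x < n + 1
    have hxn1 : x < (n : ℝ) + 1 := Nat.lt_floor_add_one x
    have hnm' : n + 1 ≤ m := by
      have : ⌈x⌉₊ ≤ m := Nat.ceil_le.2 (by simpa using h2)
      have : n + 1 ≤ ⌈x⌉₊ := by
        have := Nat.lt_ceil.2 (show (n:ℝ) < x from hint)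
        omega
      omega
    set y := (m : ℝ) + 1 - x with hy
    have hy1 : ((m - n : ℕ) : ℝ) ≤ y := by
      rw [Nat.cast_sub hnm, hy]; linarith
    have hy2 : y ≤ ((m - n : ℕ) : ℝ) + 1 := by
      rw [Nat.cast_sub hnm, hy]
      have : (n : ℝ) ≤ x := Nat.floor_le hx0
      linarith
    rw [arcParam_eq L.reverse (m - n) (by omega) (by simpa using hy1) (by simpa using hy2),
        arcParam_eq L n hn1 (le_of_lt hint) (le_of_lt hxn1)]
    rw [getD_reverse L (by simp only [List.length_reverse, ← hm]; omega),
        getD_reverse L (by simp only [List.length_reverse, ← hm]; omega)]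
    have e1 : L.length - 1 - (m - n - 1) = n := by omega
    have e2 : L.length - 1 - (m - n) = n - 1 := by omega
    rw [e1, e2, hy]
    push_cast [Nat.cast_sub hnm]
    match_scalars <;> ring

lemma frechetDist_reverse_le (L₁ L₂ : List Pt) (h₁ : 1 ≤ L₁.length) (h₂ : 1 ≤ L₂.length) :
    frechetDist L₁.reverse L₂.reverse ≤ frechetDist L₁ L₂ := by
  apply le_of_forall_gt_imp_ge_of_dense
  intro c hc
  obtain ⟨α, β, hcα, hcβ, hmα, hmβ, h0α, h0β, h1α, h1β, hb⟩ :=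
    exists_good_matching h₁ h₂ hc
  have hrev : ContinuousOn (fun t : ℝ => 1 - t) (Set.Icc 0 1) :=
    (continuous_const.sub continuous_id).continuousOn
  have hmaps : ∀ t ∈ Set.Icc (0:ℝ) 1, (1 - t) ∈ Set.Icc (0:ℝ) 1 := by
    intro t ht
    simp only [Set.mem_Icc] at ht ⊢
    constructor <;> linarith [ht.1, ht.2]
  have key : ∀ (γ : ℝ → ℝ) (m : ℕ), MonotoneOn γ (Set.Icc 0 1) → γ 0 = 1 → γ 1 = m →
      ∀ t ∈ Set.Icc (0:ℝ) 1, 1 ≤ γ (1 - t) ∧ γ (1 - t) ≤ m := by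
    intro γ m hmγ h0γ h1γ t ht
    have ht' := hmaps t ht
    have l1 : γ 0 ≤ γ (1 - t) := hmγ (Set.mem_Icc.mpr ⟨le_refl 0, zero_le_one⟩) ht' ht'.1
    have l2 : γ (1 - t) ≤ γ 1 := hmγ ht' (Set.mem_Icc.mpr ⟨zero_le_one, le_refl 1⟩) ht'.2
    rw [h0γ] at l1
    rw [h1γ] at l2
    exact ⟨l1, l2⟩
  refine frechetDist_le (α := fun t => (L₁.length : ℝ) + 1 - α (1 - t))
    (β := fun t => (L₂.length : ℝ) + 1 - β (1 - t)) ?_ ?_ ?_ ?_ ?_ ?_ ?_ ?_ ?_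
  · exact continuousOn_const.sub (hcα.comp hrev hmaps)
  · exact continuousOn_const.sub (hcβ.comp hrev hmaps)
  · intro a ha b hb' hab
    have : α (1 - b) ≤ α (1 - a) := hmα (hmaps b hb') (hmaps a ha) (by linarith)
    simp only
    linarith
  · intro a ha b hb' hab
    have : β (1 - b) ≤ β (1 - a) := hmβ (hmaps b hb') (hmaps a ha) (by linarith)
    simp only
    linarith
  · simp only [sub_zero, h1α]; ring
  · simp only [sub_zero, h1β]; ring
  · simp only [sub_self, h0α, List.length_reverse]; ring
  · simp only [sub_self, h0β, List.length_reverse]; ring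
  · intro t ht
    obtain ⟨hα1, hα2⟩ := key α L₁.length hmα h0α h1α t ht
    obtain ⟨hβ1, hβ2⟩ := key β L₂.length hmβ h0β h1β t ht
    rw [arcParam_reverse L₁ hα1 hα2, arcParam_reverse L₂ hβ1 hβ2]
    exact hb (1 - t) (hmaps t ht)

lemma frechetDist_self_le (L : List Pt) (hL : 1 ≤ L.length) {c : ℝ} (hc : 0 ≤ c) :
    frechetDist L L ≤ c := by
  obtain ⟨hcont, hmono, h0, h1⟩ := linear_matching L.length hL
  exact frechetDist_le hcont hcont hmono hmono h0 h0 h1 h1 (fun t _ => by simp [hc])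
lemma shortcut_frechet_sub {δ : ℝ} (hδ : 0 < δ) (L : List Pt) {u s t v : ℕ}
    (hus : u ≤ s) (hst : s < t) (htv : t ≤ v) (hv : v < L.length)
    (hF : frechetDist [L.getD u 0, L.getD v 0] ((L.drop u).take (v - u + 1)) ≤ δ) :
    frechetDist [L.getD s 0, L.getD t 0] ((L.drop s).take (t - s + 1)) ≤ 2 * δ := by
  apply le_of_forall_gt_imp_ge_of_dense
  intro c hc
  set ε := (c - 2 * δ) / 2 with hε
  have hεpos : 0 < ε := by simp only [hε]; linarith
  set Lu := L.getD u 0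
  set Lv := L.getD v 0
  set Ls := L.getD s 0
  set Lt := L.getD t 0
  set Y : List Pt := (L.drop u).take (v - u + 1) with hY
  set Z : List Pt := (L.drop s).take (t - s + 1) with hZ
  have hYlen : Y.length = v - u + 1 := by
    simp only [hY, List.length_take, List.length_drop]; omega
  have hZlen : Z.length = t - s + 1 := by
    simp only [hZ, List.length_take, List.length_drop]; omega
  obtain ⟨α, β, hcα, hcβ, hmα, hmβ, h0α, h0β, h1α, h1β, hb⟩ :=
    exists_good_matching (L₁ := [Lu, Lv]) (L₂ := Y) (by simp) (by rw [hYlen]; omega)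
      (lt_of_le_of_lt hF (lt_add_of_pos_right δ hεpos))
  have h1α' : α 1 = 2 := by rw [h1α]; norm_num
  have h1β' : β 1 = ((v - u + 1 : ℕ) : ℝ) := by rw [h1β, hYlen]
  -- bounds for α on [0,1]
  have hαmem : ∀ r ∈ Set.Icc (0:ℝ) 1, 1 ≤ α r ∧ α r ≤ 2 := by
    intro r hr
    constructor
    · have := hmα (Set.mem_Icc.mpr ⟨le_refl 0, zero_le_one⟩) hr hr.1
      rwa [h0α] at this
    · have := hmα hr (Set.mem_Icc.mpr ⟨zero_le_one, le_refl 1⟩) hr.2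
      rwa [h1α'] at this
  -- the two hitting times
  have hIVT := intermediate_value_Icc (zero_le_one (α := ℝ)) hcβ
  have hr2 : ∃ r2 ∈ Set.Icc (0:ℝ) 1, β r2 = ((t - u + 1 : ℕ) : ℝ) := by
    have : ((t - u + 1 : ℕ) : ℝ) ∈ Set.Icc (β 0) (β 1) := by
      rw [h0β, h1β']
      constructor
      · exact_mod_cast Nat.one_le_iff_ne_zero.mpr (by omega)
      · exact_mod_cast (by omega : t - u + 1 ≤ v - u + 1)
    obtain ⟨r2, hr2, hr2'⟩ := hIVT this
    exact ⟨r2, hr2, hr2'⟩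
  obtain ⟨r2, hr2mem, hβr2⟩ := hr2
  have hr1 : ∃ r1 ∈ Set.Icc (0:ℝ) r2, β r1 = ((s - u + 1 : ℕ) : ℝ) := by
    have hsub : Set.Icc (0:ℝ) r2 ⊆ Set.Icc 0 1 :=
      Set.Icc_subset_Icc (le_refl 0) hr2mem.2
    have hIVT2 := intermediate_value_Icc hr2mem.1 (hcβ.mono hsub)
    have : ((s - u + 1 : ℕ) : ℝ) ∈ Set.Icc (β 0) (β r2) := by
      rw [h0β, hβr2]
      constructor
      · exact_mod_cast Nat.one_le_iff_ne_zero.mpr (by omega)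
      · exact_mod_cast (by omega : s - u + 1 ≤ t - u + 1)
    obtain ⟨r1, hr1, hr1'⟩ := hIVT2 this
    exact ⟨r1, hr1, hr1'⟩
  obtain ⟨r1, hr1mem, hβr1⟩ := hr1
  have hr1mem' : r1 ∈ Set.Icc (0:ℝ) 1 := ⟨hr1mem.1, le_trans hr1mem.2 hr2mem.2⟩
  have hr12 : r1 ≤ r2 := hr1mem.2
  -- evaluation of Y at the hitting values
  have hYs : arcParam Y (β r1) = Ls := by
    rw [hβr1, arcParam_natCast Y (s - u + 1) (by omega)]
    simp only [Nat.add_sub_cancel, hY]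
    rw [getD_take _ (by omega : s - u < v - u + 1), getD_drop]
    congr 1
    omega
  have hYt : arcParam Y (β r2) = Lt := by
    rw [hβr2, arcParam_natCast Y (t - u + 1) (by omega)]
    simp only [Nat.add_sub_cancel, hY]
    rw [getD_take _ (by omega : t - u < v - u + 1), getD_drop]
    congr 1
    omega
  -- the A-side points at hitting times
  have hApair : ∀ r ∈ Set.Icc (0:ℝ) 1,
      arcParam [Lu, Lv] (α r) = (2 - α r) • Lu + (α r - 1) • Lv := by
    intro r hr
    exact arcParam_pair Lu Lv (hαmem r hr).1 (hαmem r hr).2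
  have hPs : ‖arcParam [Lu, Lv] (α r1) - Ls‖ ≤ δ + ε := by
    have := hb r1 hr1mem'
    rwa [hYs] at this
  have hPt : ‖arcParam [Lu, Lv] (α r2) - Lt‖ ≤ δ + ε := by
    have := hb r2 hr2mem
    rwa [hYt] at this
  -- the time rescaling
  set φ : ℝ → ℝ := fun r => r1 + r * (r2 - r1) with hφ
  have hφcont : ContinuousOn φ (Set.Icc 0 1) :=
    (continuous_const.add (continuous_id.mul continuous_const)).continuousOn
  have hφmono : MonotoneOn φ (Set.Icc 0 1) := by
    intro a _ b _ hab
    simp only [hφ]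
    have := mul_le_mul_of_nonneg_right hab (sub_nonneg.mpr hr12)
    linarith
  have hφmaps' : ∀ r ∈ Set.Icc (0:ℝ) 1, φ r ∈ Set.Icc r1 r2 := by
    intro r hr
    simp only [hφ, Set.mem_Icc] at hr ⊢
    have h1 := mul_nonneg hr.1 (sub_nonneg.mpr hr12)
    have h2 := mul_le_mul_of_nonneg_right hr.2 (sub_nonneg.mpr hr12)
    constructor
    · linarith
    · linarith
  have hφmaps : ∀ r ∈ Set.Icc (0:ℝ) 1, φ r ∈ Set.Icc (0:ℝ) 1 := fun r hr =>
    ⟨le_trans hr1mem'.1 (hφmaps' r hr).1, le_trans (hφmaps' r hr).2 hr2mem.2⟩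
  have hφ0 : φ 0 = r1 := by simp [hφ]
  have hφ1 : φ 1 = r2 := by simp [hφ]
  set lamS := α r1 - 1 with hlamS
  set lamT := α r2 - 1 with hlamT
  have hlam : lamS ≤ lamT := by
    have := hmα hr1mem' hr2mem hr12
    simp only [hlamS, hlamT]
    linarith
  -- the convex reparametrisation
  obtain ⟨μ, hcμ, hmμ, hμ0, hμ1, hμmem, hμconv⟩ : ∃ μ : ℝ → ℝ,
      ContinuousOn μ (Set.Icc 0 1) ∧ MonotoneOn μ (Set.Icc 0 1) ∧ μ 0 = 0 ∧ μ 1 = 1 ∧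
      (∀ r ∈ Set.Icc (0:ℝ) 1, 0 ≤ μ r ∧ μ r ≤ 1) ∧
      (∀ r ∈ Set.Icc (0:ℝ) 1, α (φ r) - 1 = (1 - μ r) * lamS + μ r * lamT) := by
    have hαφ : ∀ r ∈ Set.Icc (0:ℝ) 1, α r1 ≤ α (φ r) ∧ α (φ r) ≤ α r2 := by
      intro r hr
      have h1 := hφmaps' r hr
      have h2 := hφmaps r hr
      constructor
      · exact hmα hr1mem' h2 h1.1
      · exact hmα h2 hr2mem h1.2
    rcases eq_or_lt_of_le hlam with heq | hlt
    · refine ⟨fun r => r, continuousOn_id, monotoneOn_id, rfl, rfl,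
        fun r hr => ⟨hr.1, hr.2⟩, ?_⟩
      intro r hr
      have h1 := (hαφ r hr).1
      have h2 := (hαφ r hr).2
      have : α (φ r) = α r1 := by
        simp only [hlamS, hlamT] at heq
        linarith
      rw [this]
      simp only [hlamS]
      rw [← heq]
      ring
    · have hne : lamT - lamS ≠ 0 := by linarith
      refine ⟨fun r => (α (φ r) - 1 - lamS) / (lamT - lamS), ?_, ?_, ?_, ?_, ?_, ?_⟩
      · have hcc : ContinuousOn (fun r => ((α ∘ φ) r - (1 + lamS)) / (lamT - lamS))
            (Set.Icc 0 1) :=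
          ((hcα.comp hφcont hφmaps).sub continuousOn_const).div_const _
        exact hcc.congr (fun r _ => by simp only [Function.comp_apply]; ring)
      · intro a ha b hb' hab
        have : α (φ a) ≤ α (φ b) :=
          hmα (hφmaps a ha) (hφmaps b hb') (hφmono ha hb' hab)
        exact div_le_div_of_nonneg_right (by linarith) (by linarith)
      · simp [hφ0, hlamS]
      · simp only [hφ1]
        rw [show α r2 - 1 = lamT from hlamT.symm]
        exact div_self hne
      · intro r hr
        have h1 := (hαφ r hr).1
        have h2 := (hαφ r hr).2
        constructor
        · apply div_nonneg ?_ (by linarith)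
          simp only [hlamS]; linarith
        · rw [div_le_one (by linarith)]
          simp only [hlamT]; linarith
      · intro r hr
        field_simp
        ring
  -- now the final matching
  have hut : u ≤ t := le_trans hus (le_of_lt hst)
  have huv : u ≤ v := le_trans hut htv
  have hsv : s ≤ v := le_trans (le_of_lt hst) htv
  set α' : ℝ → ℝ := fun r => 1 + μ r with hα'
  set β' : ℝ → ℝ := fun r => β (φ r) - ((s - u : ℕ) : ℝ) with hβ'
  have hc2 : c = (δ + ε) + ((δ + ε) + 0) + 0 := by rw [hε]; ring
  have main : frechetDist [Ls, Lt] Z ≤ 2 * (δ + ε) := by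
    apply frechetDist_le (α := α') (β := β')
    · exact continuousOn_const.add hcμ
    · exact (hcβ.comp hφcont hφmaps).sub continuousOn_const
    · intro a ha b hb' hab
      have := hmμ ha hb' hab
      simp only [hα']
      linarith
    · intro a ha b hb' hab
      have := hmβ (hφmaps a ha) (hφmaps b hb') (hφmono ha hb' hab)
      simp only [hβ']
      linarith
    · simp [hα', hμ0]
    · simp only [hβ', hφ0, hβr1]
      push_cast [Nat.cast_sub hus]
      ring
    · simp [hα', hμ1]
      norm_num
    · simp only [hβ', hφ1, hβr2, hZlen]
      push_cast [Nat.cast_sub hus, Nat.cast_sub hut, Nat.cast_sub (le_of_lt hst)]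
      ring
    · intro r hr
      have hwmem : φ r ∈ Set.Icc (0:ℝ) 1 := hφmaps r hr
      have hμr := hμmem r hr
      have hβw1 : ((s - u + 1:ℕ):ℝ) ≤ β (φ r) := by
        rw [← hβr1]; exact hmβ hr1mem' hwmem (hφmaps' r hr).1
      have hβw2 : β (φ r) ≤ ((t - u + 1:ℕ):ℝ) := by
        rw [← hβr2]; exact hmβ hwmem hr2mem (hφmaps' r hr).2
      have hbw1 : (s:ℝ) - u + 1 ≤ β (φ r) := by
        push_cast [Nat.cast_sub hus] at hβw1; linarith
      have hbw2 : β (φ r) ≤ (t:ℝ) - u + 1 := by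
        push_cast [Nat.cast_sub hut] at hβw2; linarith
      have hsu : ((s - u : ℕ):ℝ) = (s:ℝ) - u := by push_cast [Nat.cast_sub hus]; ring
      have heZ : arcParam Z (β' r) = arcParam Y (β (φ r)) := by
        have e1 : arcParam Z (β (φ r) - ((s - u:ℕ):ℝ)) =
            arcParam L ((β (φ r) - ((s - u:ℕ):ℝ)) + s) := by
          rw [hZ]
          apply arcParam_drop_take L s (t - s + 1)
          · rw [hsu]; linarith
          · rw [hsu]; push_cast [Nat.cast_sub (le_of_lt hst)]; linarith
        have e2 : arcParam Y (β (φ r)) = arcParam L (β (φ r) + u) := by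
          rw [hY]
          apply arcParam_drop_take L u (v - u + 1)
          · have : (1:ℝ) ≤ (s:ℝ) - u + 1 := by
              have : (u:ℝ) ≤ s := by exact_mod_cast hus
              linarith
            linarith
          · push_cast [Nat.cast_sub huv]
            have : (t:ℝ) ≤ v := by exact_mod_cast htv
            linarith
        rw [hβ'] at *
        rw [e1, e2]
        congr 1
        rw [hsu]
        ring
      have heX : arcParam [Ls, Lt] (α' r) = (1 - μ r) • Ls + μ r • Lt := by
        have h := arcParam_pair Ls Lt (x := α' r) (by simp only [hα']; linarith [hμr.1])
          (by simp only [hα']; linarith [hμr.2])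
        rw [h]
        simp only [hα']
        match_scalars <;> ring
      have heA : arcParam [Lu, Lv] (α (φ r)) =
          (1 - μ r) • arcParam [Lu, Lv] (α r1) + μ r • arcParam [Lu, Lv] (α r2) := by
        rw [hApair _ hwmem, hApair r1 hr1mem', hApair r2 hr2mem]
        have hcv := hμconv r hr
        rw [hlamS, hlamT] at hcv
        match_scalars
        · linear_combination -hcv
        · linear_combination hcv
      have key : arcParam [Ls, Lt] (α' r) - arcParam Z (β' r)
          = ((1 - μ r) • (Ls - arcParam [Lu, Lv] (α r1)) + μ r • (Lt - arcParam [Lu, Lv] (α r2)))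
            + (arcParam [Lu, Lv] (α (φ r)) - arcParam Y (β (φ r))) := by
        rw [heX, heZ, heA]
        module
      rw [key]
      have hPs' : ‖Ls - arcParam [Lu, Lv] (α r1)‖ ≤ δ + ε := by
        rw [norm_sub_rev]; exact hPs
      have hPt' : ‖Lt - arcParam [Lu, Lv] (α r2)‖ ≤ δ + ε := by
        rw [norm_sub_rev]; exact hPt
      calc ‖((1 - μ r) • (Ls - arcParam [Lu, Lv] (α r1)) + μ r • (Lt - arcParam [Lu, Lv] (α r2)))
            + (arcParam [Lu, Lv] (α (φ r)) - arcParam Y (β (φ r)))‖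
          ≤ ‖(1 - μ r) • (Ls - arcParam [Lu, Lv] (α r1)) + μ r • (Lt - arcParam [Lu, Lv] (α r2))‖
            + ‖arcParam [Lu, Lv] (α (φ r)) - arcParam Y (β (φ r))‖ := norm_add_le _ _
        _ ≤ (‖(1 - μ r) • (Ls - arcParam [Lu, Lv] (α r1))‖ + ‖μ r • (Lt - arcParam [Lu, Lv] (α r2))‖)
            + (δ + ε) := add_le_add (norm_add_le _ _) (hb (φ r) hwmem)
        _ ≤ ((1 - μ r) * (δ + ε) + μ r * (δ + ε)) + (δ + ε) := by
            apply add_le_add_left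
            apply add_le_add
            · rw [norm_smul, Real.norm_eq_abs, abs_of_nonneg (by linarith [hμr.2])]
              exact mul_le_mul_of_nonneg_left hPs' (by linarith [hμr.2])
            · rw [norm_smul, Real.norm_eq_abs, abs_of_nonneg hμr.1]
              exact mul_le_mul_of_nonneg_left hPt' hμr.1
        _ = 2 * (δ + ε) := by ring
  calc frechetDist [Ls, Lt] Z ≤ 2 * (δ + ε) := main
    _ = c := by rw [hε]; ring

lemma reverse_drop_take (L : List Pt) {p q : ℕ} (hpq : p ≤ q) (hq : q < L.length) :
    (L.reverse.drop (L.length - 1 - q)).take (q - p + 1)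
      = ((L.drop p).take (q - p + 1)).reverse := by
  apply List.ext_getElem?
  intro j
  have hlen1 : ((L.reverse.drop (L.length - 1 - q)).take (q - p + 1)).length = q - p + 1 := by
    simp only [List.length_take, List.length_drop, List.length_reverse]
    omega
  have hlen2 : (((L.drop p).take (q - p + 1)).reverse).length = q - p + 1 := by
    simp only [List.length_reverse, List.length_take, List.length_drop]
    omega
  rcases lt_or_ge j (q - p + 1) with hj | hj
  · rw [List.getElem?_take_of_lt hj, List.getElem?_drop,
      List.getElem?_reverse (by omega : L.length - 1 - q + j < L.length)]
    rw [List.getElem?_reverse (by rw [List.length_take, List.length_drop]; omega :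
      j < ((L.drop p).take (q - p + 1)).length)]
    rw [List.length_take, List.length_drop]
    rw [List.getElem?_take_of_lt (by omega), List.getElem?_drop]
    congr 1
    omega
  · rw [List.getElem?_eq_none (by omega), List.getElem?_eq_none (by omega)]

lemma frechetDist_mirror (L : List Pt) {p q : ℕ} (hpq : p < q) (hq : q < L.length) :
    frechetDist [L.getD p 0, L.getD q 0] ((L.drop p).take (q - p + 1)) ≤
    frechetDist [L.reverse.getD (L.length - 1 - q) 0, L.reverse.getD (L.length - 1 - p) 0]
      ((L.reverse.drop (L.length - 1 - q)).take (q - p + 1)) := by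
  have e1 : L.reverse.getD (L.length - 1 - q) 0 = L.getD q 0 := by
    rw [getD_reverse L (by omega)]
    congr 1
    omega
  have e2 : L.reverse.getD (L.length - 1 - p) 0 = L.getD p 0 := by
    rw [getD_reverse L (by omega)]
    congr 1
    omega
  have e3 : (L.reverse.drop (L.length - 1 - q)).take (q - p + 1)
      = ((L.drop p).take (q - p + 1)).reverse := reverse_drop_take L (le_of_lt hpq) hq
  rw [e1, e2, e3]
  have e4 : [L.getD p 0, L.getD q 0] = ([L.getD q 0, L.getD p 0] : List Pt).reverse := by
    simp
  rw [e4]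
  have h := frechetDist_reverse_le [L.getD q 0, L.getD p 0]
    (((L.drop p).take (q - p + 1)).reverse) (by simp)
    (by simp only [List.length_reverse, List.length_take, List.length_drop]; omega)
  simp only [List.reverse_reverse] at h
  exact h
/-- A polyline: a list of at least two bend points in which each bend appears at most
once. -/
structure Polyline where
  pts : List Pt
  two_le : 2 ≤ pts.length
  nodup : pts.Nodup

/-- An instance `(B, 𝓛, δ)` of polyline bundle simplification: a finite set `B` of bend
points, a bundle of `numLines` polylines whose bends all belong to `B`, and a positive
distance threshold `δ`. -/
structure PBSInstance where
  B : Finset Pt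
  numLines : ℕ
  line : Fin numLines → Polyline
  δ : ℝ
  δ_pos : 0 < δ
  bends_mem : ∀ i : Fin numLines, ∀ p ∈ (line i).pts, p ∈ B

/-- `(u, v)` (0-based indices into `L`) is a valid shortcut of the polyline `L` with
threshold `δ`: `u` comes before `v` and the Fréchet distance between the line segment
from `L[u]` to `L[v]` and the sub-polyline `L[u..v]` is at most `δ`. -/
def IsShortcut (δ : ℝ) (L : List Pt) (u v : ℕ) : Prop :=
  u < v ∧ v < L.length ∧
    frechetDist [L.getD u 0, L.getD v 0] ((L.drop u).take (v - u + 1)) ≤ δ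

/-- `B'` is a valid simplification of the PBS instance `I` with threshold `δ`: `B' ⊆ B`,
every polyline keeps its start and end point, and every segment of the induced
simplification (i.e. every pair of retained bends with no retained bend in between) has
Fréchet distance at most `δ` to the corresponding sub-polyline. -/
def IsValidSimplification (I : PBSInstance) (δ : ℝ) (B' : Set Pt) : Prop :=
  B' ⊆ ↑I.B ∧ ∀ i : Fin I.numLines,
    (I.line i).pts.getD 0 0 ∈ B' ∧
    (I.line i).pts.getD ((I.line i).pts.length - 1) 0 ∈ B' ∧
    ∀ p q : ℕ, p < q → q < (I.line i).pts.length →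
      (I.line i).pts.getD p 0 ∈ B' → (I.line i).pts.getD q 0 ∈ B' →
      (∀ r : ℕ, p < r → r < q → (I.line i).pts.getD r 0 ∉ B') →
      frechetDist [(I.line i).pts.getD p 0, (I.line i).pts.getD q 0]
        (((I.line i).pts.drop p).take (q - p + 1)) ≤ δ

/-- `OPT_PBS`: the minimum size of a valid simplification of the instance `I`. -/
noncomputable def optPBS (I : PBSInstance) : ℕ :=
  sInf { k : ℕ | ∃ B' : Set Pt, IsValidSimplification I I.δ B' ∧ B'.ncard = k }

/-- The `i`-th polyline of `I` after fixing an orientation: either the polyline itself or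
its reversal. -/
def orientedLine (I : PBSInstance) (ori : Fin I.numLines → Bool) (i : Fin I.numLines) :
    List Pt :=
  if ori i then (I.line i).pts else (I.line i).pts.reverse

/-- A star: a central bend `central ∈ B` together with, for each polyline containing
`central`, at most one incoming shortcut `(u, central)` (with respect to the fixed
orientations). -/
structure PBSStar (I : PBSInstance) (ori : Fin I.numLines → Bool) where
  central : Pt
  central_mem : central ∈ I.B
  sc : Fin I.numLines → Option ℕ
  sc_spec : ∀ i : Fin I.numLines, ∀ u : ℕ, sc i = some u →
    ∃ v : ℕ, v < (orientedLine I ori i).length ∧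
      (orientedLine I ori i).getD v 0 = central ∧
      IsShortcut I.δ (orientedLine I ori i) u v

/-- The star `s` covers the segment–polyline pair given by polyline `i` and the segment
between positions `k` and `k+1` of the oriented polyline: `s` contains a shortcut
`(u, central)` of polyline `i` and the segment lies between `u` and the position of
`central`. -/
def PBSStar.covers {I : PBSInstance} {ori : Fin I.numLines → Bool} (s : PBSStar I ori)
    (i : Fin I.numLines) (k : ℕ) : Prop :=
  ∃ u : ℕ, s.sc i = some u ∧
    ∃ v : ℕ, v < (orientedLine I ori i).length ∧
      (orientedLine I ori i).getD v 0 = s.central ∧ u ≤ k ∧ k < v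

/-- A star cover: a set of stars covering all segment–polyline pairs of the instance. -/
def IsStarCover (I : PBSInstance) (ori : Fin I.numLines → Bool)
    (C : Set (PBSStar I ori)) : Prop :=
  ∀ i : Fin I.numLines, ∀ k : ℕ, k + 1 < (orientedLine I ori i).length →
    ∃ s ∈ C, s.covers i k

/-- `OPT_StCo`: the minimum size of a star cover of the instance `I` with fixed
orientations `ori`. -/
noncomputable def optStCo (I : PBSInstance) (ori : Fin I.numLines → Bool) : ℕ :=
  sInf { k : ℕ | ∃ C : Set (PBSStar I ori), C.Finite ∧ IsStarCover I ori C ∧ C.ncard = k }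

-- helper lemmas about oriented lines
lemma orientedLine_length (I : PBSInstance) (ori : Fin I.numLines → Bool) (i : Fin I.numLines) :
    (orientedLine I ori i).length = (I.line i).pts.length := by
  unfold orientedLine; split <;> simp

lemma orientedLine_nodup (I : PBSInstance) (ori : Fin I.numLines → Bool) (i : Fin I.numLines) :
    (orientedLine I ori i).Nodup := by
  unfold orientedLine; split
  · exact (I.line i).nodup
  · exact (List.nodup_reverse).mpr (I.line i).nodup

lemma orientedLine_two_le (I : PBSInstance) (ori : Fin I.numLines → Bool) (i : Fin I.numLines) :
    2 ≤ (orientedLine I ori i).length := by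
  rw [orientedLine_length]; exact (I.line i).two_le

lemma orientedLine_getD_mem (I : PBSInstance) (ori : Fin I.numLines → Bool) (i : Fin I.numLines)
    {j : ℕ} (hj : j < (orientedLine I ori i).length) :
    (orientedLine I ori i).getD j 0 ∈ I.B := by
  apply I.bends_mem i
  have h1 : (orientedLine I ori i).getD j 0 ∈ orientedLine I ori i := by
    rw [List.getD_eq_getElem _ _ hj]
    exact List.getElem_mem hj
  revert h1
  unfold orientedLine
  split
  · exact fun h1 => h1
  · exact fun h1 => List.mem_reverse.mp h1

/-- positions with equal getD in a nodup list are equal -/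
lemma nodup_getD_inj {L : List Pt} (hnd : L.Nodup) {a b : ℕ}
    (ha : a < L.length) (hb : b < L.length) (h : L.getD a 0 = L.getD b 0) : a = b := by
  rw [List.getD_eq_getElem _ _ ha, List.getD_eq_getElem _ _ hb] at h
  exact (List.Nodup.getElem_inj_iff hnd).mp h

lemma orientedLine_true (I : PBSInstance) (ori : Fin I.numLines → Bool) (i : Fin I.numLines)
    (h : ori i = true) : orientedLine I ori i = (I.line i).pts := by
  simp [orientedLine, h]

lemma orientedLine_false (I : PBSInstance) (ori : Fin I.numLines → Bool) (i : Fin I.numLines)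
    (h : ori i = false) : orientedLine I ori i = (I.line i).pts.reverse := by
  simp [orientedLine, h]

/-- from a valid simplification: consecutive retained bends in an oriented line give
a shortcut -/
lemma valid_to_shortcut (I : PBSInstance) (ori : Fin I.numLines → Bool) {B₀ : Set Pt}
    (hval : IsValidSimplification I I.δ B₀) (i : Fin I.numLines) {a b : ℕ} (hab : a < b)
    (hb : b < (orientedLine I ori i).length)
    (haB : (orientedLine I ori i).getD a 0 ∈ B₀) (hbB : (orientedLine I ori i).getD b 0 ∈ B₀)
    (hbet : ∀ r, a < r → r < b → (orientedLine I ori i).getD r 0 ∉ B₀) :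
    IsShortcut I.δ (orientedLine I ori i) a b := by
  refine ⟨hab, hb, ?_⟩
  rcases Bool.eq_false_or_eq_true (ori i) with h | h
  · rw [orientedLine_true I ori i h] at hb haB hbB hbet ⊢
    exact (hval.2 i).2.2 a b hab hb haB hbB hbet
  · -- reversed orientation
    rw [orientedLine_false I ori i h] at hb haB hbB hbet ⊢
    set L := (I.line i).pts with hL
    set m := L.length with hm
    have hbm : b < m := by simpa using hb
    have hmlen : (I.line i).pts.length = m := by rw [hm, hL]
    have key := frechetDist_mirror L.reverse (p := a) (q := b) hab hb
    simp only [List.reverse_reverse, List.length_reverse, ← hm] at key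
    refine le_trans key ?_
    have hgb : L.getD (m - 1 - b) 0 = L.reverse.getD b 0 := by
      rw [getD_reverse L hbm]
    have hga : L.getD (m - 1 - a) 0 = L.reverse.getD a 0 := by
      rw [getD_reverse L (by omega : a < L.length)]
    have hseg := (hval.2 i).2.2 (m - 1 - b) (m - 1 - a) (by omega) (by omega)
      (by rw [← hL, hgb]; exact hbB) (by rw [← hL, hga]; exact haB) ?_
    · have e : m - 1 - a - (m - 1 - b) + 1 = b - a + 1 := by omega
      rw [← hL, e] at hseg
      exact hseg
    · intro r h1 h2
      have hgr : L.getD r 0 = L.reverse.getD (m - 1 - r) 0 := by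
        rw [getD_reverse L (by omega : m - 1 - r < L.length)]
        congr 1
        omega
      rw [← hL, hgr]
      exact hbet (m - 1 - r) (by omega) (by omega)

/-- the full bend set is a valid simplification -/
lemma validB (I : PBSInstance) : IsValidSimplification I I.δ ↑I.B := by
  refine ⟨subset_rfl, fun i => ⟨?_, ?_, ?_⟩⟩
  · have h2 := (I.line i).two_le
    exact I.bends_mem i _ (by
      rw [List.getD_eq_getElem _ _ (by omega)]
      exact List.getElem_mem _)
  · have h2 := (I.line i).two_le
    exact I.bends_mem i _ (by
      rw [List.getD_eq_getElem _ _ (by omega)]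
      exact List.getElem_mem _)
  · intro p q hpq hq hp' hq' hbet
    have hq1 : q = p + 1 := by
      by_contra hne
      refine hbet (p + 1) (by omega) (by omega) ?_
      exact I.bends_mem i _ (by
        rw [List.getD_eq_getElem _ _ (by omega)]
        exact List.getElem_mem _)
    subst hq1
    have hlist : ((I.line i).pts.drop p).take (p + 1 - p + 1)
        = [(I.line i).pts.getD p 0, (I.line i).pts.getD (p + 1) 0] := by
      have e : p + 1 - p + 1 = 2 := by omega
      rw [e]
      rw [List.drop_eq_getElem_cons (by omega : p < (I.line i).pts.length)]
      rw [List.drop_eq_getElem_cons (by omega : p + 1 < (I.line i).pts.length)]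
      rw [show ∀ (x y : Pt) (l : List Pt), List.take 2 (x :: y :: l) = [x, y]
        from fun x y l => rfl]
      rw [List.getD_eq_getElem _ _ (by omega : p < (I.line i).pts.length),
        List.getD_eq_getElem _ _ (by omega : p + 1 < (I.line i).pts.length)]
    rw [hlist]
    exact frechetDist_self_le _ (by simp) (le_of_lt I.δ_pos)

open Classical in
/-- the star centered at `b` built from a simplification `B₀` -/
noncomputable def mkStar (I : PBSInstance) (ori : Fin I.numLines → Bool) (B₀ : Set Pt)
    (b : Pt) (hb : b ∈ I.B) : PBSStar I ori where
  central := b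
  central_mem := hb
  sc := fun i =>
    if h : ∃ u, ∃ v, v < (orientedLine I ori i).length ∧
        (orientedLine I ori i).getD v 0 = b ∧ IsShortcut I.δ (orientedLine I ori i) u v ∧
        (orientedLine I ori i).getD u 0 ∈ B₀ ∧
        (∀ r, u < r → r < v → (orientedLine I ori i).getD r 0 ∉ B₀)
    then some h.choose else none
  sc_spec := by
    intro i u hu
    split at hu
    case isTrue h =>
      obtain ⟨v, hv1, hv2, hv3, _, _⟩ := h.choose_spec
      injection hu with hu
      subst hu
      exact ⟨v, hv1, hv2, hv3⟩
    case isFalse h => exact absurd hu (by simp)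

lemma optStCo_le_optPBS (I : PBSInstance) (ori : Fin I.numLines → Bool) :
    optStCo I ori ≤ optPBS I := by
  classical
  have hne : { k : ℕ | ∃ B₀ : Set Pt, IsValidSimplification I I.δ B₀ ∧ B₀.ncard = k }.Nonempty :=
    ⟨(↑I.B : Set Pt).ncard, ↑I.B, validB I, rfl⟩
  obtain ⟨B₀, hval, hcard⟩ := Nat.sInf_mem hne
  have hB₀fin : B₀.Finite := Set.Finite.subset I.B.finite_toSet hval.1
  -- the retained positions facts, oriented
  have hfirstB : ∀ i : Fin I.numLines, (orientedLine I ori i).getD 0 0 ∈ B₀ := by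
    intro i
    have h2 := (I.line i).two_le
    rcases Bool.eq_false_or_eq_true (ori i) with h | h
    · rw [orientedLine_true I ori i h]
      exact (hval.2 i).1
    · rw [orientedLine_false I ori i h, getD_reverse _ (by omega)]
      simpa using (hval.2 i).2.1
  have hlastB : ∀ i : Fin I.numLines,
      (orientedLine I ori i).getD ((orientedLine I ori i).length - 1) 0 ∈ B₀ := by
    intro i
    have h2 := (I.line i).two_le
    rcases Bool.eq_false_or_eq_true (ori i) with h | h
    · rw [orientedLine_true I ori i h]
      exact (hval.2 i).2.1
    · rw [orientedLine_false I ori i h]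
      rw [List.length_reverse, getD_reverse _ (by omega)]
      have e : (I.line i).pts.length - 1 - ((I.line i).pts.length - 1) = 0 := by omega
      rw [e]
      exact (hval.2 i).1
  -- the star cover
  set C₀ : Set (PBSStar I ori) :=
    (fun p : {x : Pt // x ∈ I.B} => mkStar I ori B₀ p.1 p.2) '' {p | p.1 ∈ B₀} with hC₀
  have hC₀fin : C₀.Finite := Set.Finite.image _ (Set.toFinite _)
  have hC₀cover : IsStarCover I ori C₀ := by
    intro i k hk
    set L' := orientedLine I ori i with hL'
    -- the next retained position
    set R : Set ℕ := {r | k < r ∧ r < L'.length ∧ L'.getD r 0 ∈ B₀} with hR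
    have hRne : (L'.length - 1) ∈ R := by
      refine ⟨by omega, by omega, ?_⟩
      rw [hL']
      exact hlastB i
    set v : ℕ := sInf R with hv
    have hvR : v ∈ R := Nat.sInf_mem ⟨_, hRne⟩
    have hvmin : ∀ r, r < v → r ∉ R := fun r hr => Nat.notMem_of_lt_sInf hr
    -- the previous retained position
    set u : ℕ := Nat.findGreatest (fun r => L'.getD r 0 ∈ B₀) k with hu
    have huB : L'.getD u 0 ∈ B₀ := by
      rw [hu]
      exact Nat.findGreatest_spec (P := fun r => L'.getD r 0 ∈ B₀) (m := 0) (Nat.zero_le k)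
        (by rw [hL']; exact hfirstB i)
    have huk : u ≤ k := Nat.findGreatest_le k
    have humax : ∀ r, u < r → r ≤ k → L'.getD r 0 ∉ B₀ := by
      intro r h1 h2
      exact Nat.findGreatest_is_greatest h1 h2
    have hbet : ∀ r, u < r → r < v → L'.getD r 0 ∉ B₀ := by
      intro r h1 h2 hrB
      rcases le_or_gt r k with h3 | h3
      · exact humax r h1 h3 hrB
      · exact hvmin r h2 ⟨h3, by have := hvR.2.1; omega, hrB⟩
    have huv : u < v := by
      have := hvR.1
      omega
    have hshort : IsShortcut I.δ L' u v :=
      valid_to_shortcut I ori hval i huv hvR.2.1 huB hvR.2.2 hbet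
    -- the central bend
    set b : Pt := L'.getD v 0 with hb
    have hbmem : b ∈ I.B := orientedLine_getD_mem I ori i hvR.2.1
    have hbB₀ : b ∈ B₀ := hvR.2.2
    refine ⟨mkStar I ori B₀ b hbmem, ⟨⟨b, hbmem⟩, hbB₀, rfl⟩, ?_⟩
    -- it covers (i, k)
    have hex : ∃ u', ∃ v', v' < (orientedLine I ori i).length ∧
        (orientedLine I ori i).getD v' 0 = b ∧ IsShortcut I.δ (orientedLine I ori i) u' v' ∧
        (orientedLine I ori i).getD u' 0 ∈ B₀ ∧
        (∀ r, u' < r → r < v' → (orientedLine I ori i).getD r 0 ∉ B₀) :=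
      ⟨u, v, hvR.2.1, rfl, hshort, huB, hbet⟩
    obtain ⟨v', hv'len, hv'eq, hshort', hu'B, hu'bet⟩ := hex.choose_spec
    have hvv' : v' = v :=
      nodup_getD_inj (orientedLine_nodup I ori i) hv'len hvR.2.1 hv'eq
    have hlt : hex.choose < v' := hshort'.1
    have hu'k : hex.choose ≤ k := by
      by_contra hgt
      push_neg at hgt
      have hmem : hex.choose ∈ R := ⟨hgt, by rw [hL']; omega, by rw [hL']; exact hu'B⟩
      have := Nat.sInf_le hmem
      omega
    refine ⟨hex.choose, ?_, v, hvR.2.1, rfl, hu'k, hvR.1⟩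
    simp only [mkStar]
    rw [dif_pos hex]
  have hle : optStCo I ori ≤ C₀.ncard := Nat.sInf_le ⟨C₀, hC₀fin, hC₀cover, rfl⟩
  have hopt : B₀.ncard = optPBS I := hcard
  refine le_trans hle (le_trans (Set.ncard_image_le (Set.toFinite _)) ?_)
  rw [← hopt]
  have : Subtype.val '' {p : {x : Pt // x ∈ I.B} | p.1 ∈ B₀} ⊆ B₀ := by
    rintro x ⟨p, hp, rfl⟩
    exact hp
  calc {p : {x : Pt // x ∈ I.B} | p.1 ∈ B₀}.ncard
      = (Subtype.val '' {p : {x : Pt // x ∈ I.B} | p.1 ∈ B₀}).ncard :=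
        (Set.ncard_image_of_injective _ Subtype.val_injective).symm
    _ ≤ B₀.ncard := Set.ncard_le_ncard this hB₀fin

/-- Lemma 4.4: given a star cover `C`, the set `B_central ∪ B_first` of central bends of
the stars of `C` together with the first bends of all (oriented) polylines is a valid
simplification of the relaxed instance with threshold `2δ`; moreover, if
`|C| ≤ α·OPT_StCo` for some `α ≥ 1`, then `|B_central ∪ B_first| ≤ (α + 1)·OPT_PBS`. -/
theorem starCover_to_simplification (I : PBSInstance) (ori : Fin I.numLines → Bool)
    (C : Set (PBSStar I ori)) (hCfin : C.Finite) (hC : IsStarCover I ori C) :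
    IsValidSimplification I (2 * I.δ)
      ((PBSStar.central '' C) ∪ Set.range (fun i => (orientedLine I ori i).getD 0 0)) ∧
    ∀ α : ℝ, 1 ≤ α → (C.ncard : ℝ) ≤ α * (optStCo I ori : ℝ) →
      (((PBSStar.central '' C) ∪
          Set.range (fun i => (orientedLine I ori i).getD 0 0)).ncard : ℝ)
        ≤ (α + 1) * (optPBS I : ℝ) := by
  classical
  set B' : Set Pt := (PBSStar.central '' C) ∪
    Set.range (fun i => (orientedLine I ori i).getD 0 0) with hB'
  have hfirst : ∀ i, (orientedLine I ori i).getD 0 0 ∈ B' := fun i => Or.inr ⟨i, rfl⟩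
  have hlast : ∀ i : Fin I.numLines,
      (orientedLine I ori i).getD ((orientedLine I ori i).length - 1) 0 ∈ B' := by
    intro i
    have h2 := orientedLine_two_le I ori i
    obtain ⟨st, hstC, hcov⟩ := hC i ((orientedLine I ori i).length - 2) (by omega)
    unfold PBSStar.covers at hcov
    obtain ⟨u, hscu, v, hvlen, hvcen, huk, hkv⟩ := hcov
    have hv : v = (orientedLine I ori i).length - 1 := by omega
    rw [hv] at hvcen
    exact Or.inl ⟨st, hstC, hvcen.symm⟩
  -- core: consecutive retained bends in the oriented line
  have hcore : ∀ i : Fin I.numLines, ∀ s t : ℕ, s < t → t < (orientedLine I ori i).length →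
      (orientedLine I ori i).getD s 0 ∈ B' → (orientedLine I ori i).getD t 0 ∈ B' →
      (∀ r, s < r → r < t → (orientedLine I ori i).getD r 0 ∉ B') →
      frechetDist [(orientedLine I ori i).getD s 0, (orientedLine I ori i).getD t 0]
        (((orientedLine I ori i).drop s).take (t - s + 1)) ≤ 2 * I.δ := by
    intro i s t hst htlen hsB htB hbet
    obtain ⟨st, hstC, hcov⟩ := hC i s (by omega)
    unfold PBSStar.covers at hcov
    obtain ⟨u, hscu, v, hvlen, hvcen, hus, hsv⟩ := hcov
    obtain ⟨v', hv'len, hv'cen, hshort⟩ := st.sc_spec i u hscu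
    have hvv' : v = v' := nodup_getD_inj (orientedLine_nodup I ori i) hvlen hv'len
      (by rw [hvcen, hv'cen])
    subst hvv'
    have hvB : (orientedLine I ori i).getD v 0 ∈ B' := Or.inl ⟨st, hstC, hvcen.symm⟩
    have htv : t ≤ v := by
      by_contra hlt
      push_neg at hlt
      exact hbet v hsv hlt hvB
    exact shortcut_frechet_sub I.δ_pos _ hus hst htv hvlen hshort.2.2
  have hvalid : IsValidSimplification I (2 * I.δ) B' := by
    constructor
    · rintro x (⟨st, hstC, rfl⟩ | ⟨i, rfl⟩)
      · exact st.central_mem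
      · exact orientedLine_getD_mem I ori i (by have := orientedLine_two_le I ori i; omega)
    · intro i
      have h2 := (I.line i).two_le
      refine ⟨?_, ?_, ?_⟩
      · rcases Bool.eq_false_or_eq_true (ori i) with h | h
        · have hthis := hfirst i
          rwa [orientedLine_true I ori i h] at hthis
        · have hthis := hlast i
          rw [orientedLine_false I ori i h, List.length_reverse,
            getD_reverse _ (by omega)] at hthis
          have e : (I.line i).pts.length - 1 - ((I.line i).pts.length - 1) = 0 := by omega
          rwa [e] at hthis
      · rcases Bool.eq_false_or_eq_true (ori i) with h | h
        · have hthis := hlast i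
          rwa [orientedLine_true I ori i h] at hthis
        · have hthis := hfirst i
          rw [orientedLine_false I ori i h, getD_reverse _ (by omega)] at hthis
          have e : (I.line i).pts.length - 1 - 0 = (I.line i).pts.length - 1 := by omega
          rwa [e] at hthis
      · intro p q hpq hq hpB hqB hbet
        rcases Bool.eq_false_or_eq_true (ori i) with h | h
        · rw [← orientedLine_true I ori i h] at hq hpB hqB hbet ⊢
          exact hcore i p q hpq hq hpB hqB hbet
        · set m := (I.line i).pts.length with hm
          set s := m - 1 - q with hs
          set t := m - 1 - p with ht
          have holen : (orientedLine I ori i).length = m := by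
            rw [orientedLine_false I ori i h, List.length_reverse]
          have hgs : (orientedLine I ori i).getD s 0 = (I.line i).pts.getD q 0 := by
            rw [orientedLine_false I ori i h, getD_reverse _ (by omega : s < _)]
            congr 1
            omega
          have hgt : (orientedLine I ori i).getD t 0 = (I.line i).pts.getD p 0 := by
            rw [orientedLine_false I ori i h, getD_reverse _ (by omega : t < _)]
            congr 1
            omega
          have hcc := hcore i s t (by omega) (by omega)
            (by rw [hgs]; exact hqB) (by rw [hgt]; exact hpB) ?_
          · refine le_trans (frechetDist_mirror (I.line i).pts hpq hq) ?_
            rw [orientedLine_false I ori i h] at hcc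
            have e1 : t - s + 1 = q - p + 1 := by omega
            rw [e1] at hcc
            have e2 : (I.line i).pts.reverse.getD s 0
                = (I.line i).pts.reverse.getD (m - 1 - q) 0 := rfl
            exact hcc
          · intro r h1 h2
            have hgr : (orientedLine I ori i).getD r 0 = (I.line i).pts.getD (m - 1 - r) 0 := by
              rw [orientedLine_false I ori i h, getD_reverse _ (by omega : r < _)]
            rw [hgr]
            exact hbet (m - 1 - r) (by omega) (by omega)
  refine ⟨hvalid, ?_⟩
  intro α hα hcount
  have hPBSne : { k : ℕ | ∃ B₀ : Set Pt, IsValidSimplification I I.δ B₀ ∧ B₀.ncard = k }.Nonempty :=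
    ⟨(↑I.B : Set Pt).ncard, ↑I.B, validB I, rfl⟩
  obtain ⟨B₀, hB₀val, hB₀card⟩ := Nat.sInf_mem hPBSne
  have hopt : B₀.ncard = optPBS I := hB₀card
  have hB₀fin : B₀.Finite := Set.Finite.subset I.B.finite_toSet hB₀val.1
  have hfirstsub : Set.range (fun i => (orientedLine I ori i).getD 0 0) ⊆ B₀ := by
    rintro x ⟨i, rfl⟩
    show (orientedLine I ori i).getD 0 0 ∈ B₀
    have h2 := (I.line i).two_le
    rcases Bool.eq_false_or_eq_true (ori i) with h | h
    · rw [orientedLine_true I ori i h]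
      exact (hB₀val.2 i).1
    · rw [orientedLine_false I ori i h, getD_reverse _ (by omega)]
      simpa using (hB₀val.2 i).2.1
  have h1 : B'.ncard ≤ C.ncard + optPBS I := by
    refine le_trans (Set.ncard_union_le _ _) ?_
    rw [← hopt]
    exact add_le_add (Set.ncard_image_le hCfin) (Set.ncard_le_ncard hfirstsub hB₀fin)
  have h1' : (B'.ncard : ℝ) ≤ (C.ncard : ℝ) + (optPBS I : ℝ) := by exact_mod_cast h1
  have h2 : (optStCo I ori : ℝ) ≤ (optPBS I : ℝ) :=
    Nat.cast_le.mpr (optStCo_le_optPBS I ori)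
  have h3 : (C.ncard : ℝ) ≤ α * (optPBS I : ℝ) :=
    le_trans hcount (mul_le_mul_of_nonneg_left h2 (by linarith))
  calc (B'.ncard : ℝ) ≤ (C.ncard : ℝ) + (optPBS I : ℝ) := h1'
    _ ≤ α * (optPBS I : ℝ) + (optPBS I : ℝ) := by linarith
    _ = (α + 1) * (optPBS I : ℝ) := by ring
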